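/- Let d ≥ 1, L ≥ 1, m_ℓ ≥ 1 for ℓ ∈ [L], M := ∑_ℓ m_ℓ, U > 0, and let {a_j^{(ℓ)}, b_j^{(ℓ)} : ℓ ∈ [L], j ∈ [m_ℓ]} be an admissible clipping strategy (0 ≤ a_j^{(ℓ)} ≤ b_j^{(ℓ)} ≤ U). Then the worst-case total clipping bias satisfies: sup over all datasets {x_j^{(ℓ)} ∈ Δ_U : ℓ ∈ [L], j ∈ [m_ℓ]} of (1/M)·∑_{ℓ≤L} ∑_{j≤m_ℓ} dist₁(x_j^{(ℓ)}, A_{a_j^{(ℓ)}, b_j^{(ℓ)}}) equals (1/M)·∑_{ℓ≤L} ∑_{j≤m_ℓ} max{a_j^{(ℓ)}, U − b_j^{(ℓ)}}, and the supremum is attained. -/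

import Mathlib

open Finset

/-- The simplex `Δ_M ⊆ ℝ^d`: nonnegative coordinates summing to at most `M`. -/
def simplex (d : ℕ) (M : ℝ) : Set (Fin d → ℝ) :=
  {x | (∀ i, 0 ≤ x i) ∧ ∑ i, x i ≤ M}

/-- The face `δ_M ⊆ ℝ^d`: nonnegative coordinates summing to exactly `M`. -/
def face (d : ℕ) (M : ℝ) : Set (Fin d → ℝ) :=
  {x | (∀ i, 0 ≤ x i) ∧ ∑ i, x i = M}

/-- The annulus `A_{α,β} ⊆ ℝ^d`: nonnegative coordinates with sum in `[α, β]`. -/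
def annulus (d : ℕ) (α β : ℝ) : Set (Fin d → ℝ) :=
  {x | (∀ i, 0 ≤ x i) ∧ α ≤ ∑ i, x i ∧ ∑ i, x i ≤ β}

/-- The `ℓ1`-distance from a point `x ∈ ℝ^d` to a set `S ⊆ ℝ^d`. -/
noncomputable def dist1 {d : ℕ} (x : Fin d → ℝ) (S : Set (Fin d → ℝ)) : ℝ :=
  sInf ((fun y => ∑ i, |x i - y i|) '' S)

/-- An admissible clipping strategy: `0 ≤ a ℓ j ≤ b ℓ j ≤ U` for every user `ℓ`
and sample index `j`. -/
def Admissible {L : ℕ} (m : Fin L → ℕ) (U : ℝ)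
    (a b : (ℓ : Fin L) → Fin (m ℓ) → ℝ) : Prop :=
  ∀ ℓ j, 0 ≤ a ℓ j ∧ a ℓ j ≤ b ℓ j ∧ b ℓ j ≤ U

/-- the point with value `c` at coordinate `j` and `0` elsewhere -/
def sing {d : ℕ} (j : Fin d) (c : ℝ) : Fin d → ℝ := fun i => if i = j then c else 0

lemma sing_sum {d : ℕ} (j : Fin d) (c : ℝ) : ∑ i, sing j c i = c := by
  simp [sing]

lemma sing_nonneg {d : ℕ} (j : Fin d) {c : ℝ} (hc : 0 ≤ c) (i : Fin d) :
    0 ≤ sing j c i := by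
  unfold sing; split <;> simp [hc]

lemma bdd_aux {d : ℕ} (x : Fin d → ℝ) (S : Set (Fin d → ℝ)) :
    BddBelow ((fun y => ∑ i, |x i - y i|) '' S) := by
  refine ⟨0, ?_⟩
  rintro r ⟨y, -, rfl⟩
  exact Finset.sum_nonneg fun i _ => abs_nonneg _

lemma sing_mem_annulus {d : ℕ} (j : Fin d) {α β c : ℝ} (h0 : 0 ≤ c) (h1 : α ≤ c)
    (h2 : c ≤ β) : sing j c ∈ annulus d α β :=
  ⟨sing_nonneg j h0, by rw [sing_sum]; exact h1, by rw [sing_sum]; exact h2⟩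

lemma dist1_le_max {d : ℕ} (hd : 0 < d) {U α β : ℝ} (h0 : 0 ≤ α) (hαβ : α ≤ β)
    (hβU : β ≤ U) {x : Fin d → ℝ} (hx : x ∈ simplex d U) :
    dist1 x (annulus d α β) ≤ max α (U - β) := by
  obtain ⟨hxn, hxs⟩ := hx
  set s := ∑ i, x i with hs
  have hs0 : 0 ≤ s := Finset.sum_nonneg fun i _ => hxn i
  set j : Fin d := ⟨0, hd⟩
  rcases lt_or_ge s α with h | h
  · set y : Fin d → ℝ := fun i => x i + sing j (α - s) i with hy
    have hys : ∑ i, y i = α := by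
      rw [hy, Finset.sum_add_distrib, sing_sum]; ring
    have hymem : y ∈ annulus d α β := by
      refine ⟨fun i => ?_, by rw [hys], by rw [hys]; exact hαβ⟩
      have h1 := sing_nonneg j (c := α - s) (by linarith) i
      have h2 := hxn i
      rw [hy]; dsimp only; linarith
    have hval : ∑ i, |x i - y i| = α - s := by
      have key : ∀ i, |x i - y i| = sing j (α - s) i := by
        intro i
        rw [hy]
        have := sing_nonneg j (c := α - s) (by linarith) i
        rw [show x i - (x i + sing j (α - s) i) = -(sing j (α - s) i) by ring,
          abs_neg, abs_of_nonneg this]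
      rw [Finset.sum_congr rfl fun i _ => key i, sing_sum]
    calc dist1 x (annulus d α β) ≤ ∑ i, |x i - y i| :=
          csInf_le (bdd_aux x _) ⟨y, hymem, rfl⟩
      _ = α - s := hval
      _ ≤ α := by linarith
      _ ≤ max α (U - β) := le_max_left _ _
  rcases le_or_gt s β with h2 | h2
  · have hle : dist1 x (annulus d α β) ≤ 0 := by
      have hxmem : x ∈ annulus d α β := ⟨hxn, h, h2⟩
      have := csInf_le (bdd_aux x _) (Set.mem_image_of_mem _ hxmem)
      simpa [dist1] using this
    exact hle.trans (le_max_of_le_left h0)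
  · have hspos : 0 < s := lt_of_le_of_lt (h0.trans hαβ) h2
    set y : Fin d → ℝ := fun i => (β / s) * x i with hy
    have hratio0 : 0 ≤ β / s := div_nonneg (h0.trans hαβ) hs0
    have hratio1 : β / s ≤ 1 := by rw [div_le_one hspos]; exact h2.le
    have hys : ∑ i, y i = β := by
      rw [hy, ← Finset.mul_sum, ← hs, div_mul_cancel₀ _ hspos.ne']
    have hymem : y ∈ annulus d α β :=
      ⟨fun i => mul_nonneg hratio0 (hxn i), by rw [hys]; exact hαβ, le_of_eq hys⟩
    have hval : ∑ i, |x i - y i| = s - β := by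
      have key : ∀ i, |x i - y i| = (1 - β / s) * x i := by
        intro i
        rw [hy, abs_of_nonneg]
        · ring
        · nlinarith [hxn i]
      rw [Finset.sum_congr rfl fun i _ => key i, ← Finset.mul_sum, ← hs]
      field_simp
    calc dist1 x (annulus d α β) ≤ ∑ i, |x i - y i| :=
          csInf_le (bdd_aux x _) ⟨y, hymem, rfl⟩
      _ = s - β := hval
      _ ≤ U - β := by linarith
      _ ≤ max α (U - β) := le_max_right _ _

lemma dist1_zero_eq {d : ℕ} (hd : 0 < d) {α β : ℝ} (h0 : 0 ≤ α) (hαβ : α ≤ β) :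
    dist1 (0 : Fin d → ℝ) (annulus d α β) = α := by
  set j : Fin d := ⟨0, hd⟩
  have hmem : sing j α ∈ annulus d α β := sing_mem_annulus j h0 le_rfl hαβ
  apply le_antisymm
  · have hle := csInf_le (bdd_aux 0 _) ⟨sing j α, hmem, rfl⟩
    have hval : ∑ i, |(0 : Fin d → ℝ) i - sing j α i| = α := by
      have key : ∀ i, |(0 : Fin d → ℝ) i - sing j α i| = sing j α i := by
        intro i
        have := sing_nonneg j h0 i
        simp [abs_of_nonneg this]
      rw [Finset.sum_congr rfl fun i _ => key i, sing_sum]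
    calc dist1 (0 : Fin d → ℝ) (annulus d α β)
        ≤ ∑ i, |(0 : Fin d → ℝ) i - sing j α i| := hle
      _ = α := hval
  · apply le_csInf ⟨_, Set.mem_image_of_mem _ hmem⟩
    rintro r ⟨y, ⟨hyn, hy1, -⟩, rfl⟩
    calc α ≤ ∑ i, y i := hy1
      _ ≤ ∑ i, |(0 : Fin d → ℝ) i - y i| := by
          apply Finset.sum_le_sum
          intro i _
          simp only [Pi.zero_apply, zero_sub, abs_neg]
          exact le_abs_self _

lemma dist1_sing_eq {d : ℕ} (hd : 0 < d) {U α β : ℝ} (h0 : 0 ≤ α) (hαβ : α ≤ β)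
    (hβU : β ≤ U) :
    dist1 (sing (⟨0, hd⟩ : Fin d) U) (annulus d α β) = U - β := by
  set j : Fin d := ⟨0, hd⟩
  have hmem : sing j β ∈ annulus d α β := sing_mem_annulus j (h0.trans hαβ) hαβ le_rfl
  apply le_antisymm
  · have hle := csInf_le (bdd_aux (sing j U) _) ⟨sing j β, hmem, rfl⟩
    have hval : ∑ i, |sing j U i - sing j β i| = U - β := by
      have key : ∀ i, |sing j U i - sing j β i| = sing j (U - β) i := by
        intro i
        unfold sing
        split <;> simp [abs_of_nonneg, sub_nonneg.2 hβU]
      rw [Finset.sum_congr rfl fun i _ => key i, sing_sum]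
    calc dist1 (sing j U) (annulus d α β)
        ≤ ∑ i, |sing j U i - sing j β i| := hle
      _ = U - β := hval
  · apply le_csInf ⟨_, Set.mem_image_of_mem _ hmem⟩
    rintro r ⟨y, ⟨hyn, -, hy2⟩, rfl⟩
    have hsum : ∑ i, (sing j U i - y i) = U - ∑ i, y i := by
      rw [Finset.sum_sub_distrib, sing_sum]
    calc U - β ≤ U - ∑ i, y i := by linarith
      _ ≤ |∑ i, (sing j U i - y i)| := by rw [hsum]; exact le_abs_self _
      _ ≤ ∑ i, |sing j U i - y i| := Finset.abs_sum_le_sum_abs _ _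

/-- Lemma 4 of the paper: the worst-case bias.
For an admissible clipping strategy, the supremum over all datasets
`{x_j^{(ℓ)} ∈ Δ_U}` of `(1/M)·∑_ℓ ∑_j dist₁(x_j^{(ℓ)}, A_{a_j^{(ℓ)}, b_j^{(ℓ)}})` equals
`(1/M)·∑_ℓ ∑_j max{a_j^{(ℓ)}, U − b_j^{(ℓ)}}`, and the supremum is attained. -/
theorem stmt15 {d L : ℕ} (hd : 0 < d) (hL : 0 < L) (m : Fin L → ℕ) (hm : ∀ ℓ, 1 ≤ m ℓ)
    (U : ℝ) (hU : 0 < U) (a b : (ℓ : Fin L) → Fin (m ℓ) → ℝ)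
    (hab : Admissible m U a b) :
    IsGreatest {e : ℝ | ∃ x : (ℓ : Fin L) → Fin (m ℓ) → Fin d → ℝ,
        (∀ ℓ j, x ℓ j ∈ simplex d U) ∧
        e = (1 / ∑ ℓ, (m ℓ : ℝ)) *
              ∑ ℓ, ∑ j, dist1 (x ℓ j) (annulus d (a ℓ j) (b ℓ j))}
      ((1 / ∑ ℓ, (m ℓ : ℝ)) * ∑ ℓ, ∑ j, max (a ℓ j) (U - b ℓ j)) := by
  constructor
  · refine ⟨fun ℓ j => if U - b ℓ j ≤ a ℓ j then 0 else sing ⟨0, hd⟩ U,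
      fun ℓ j => ?_, ?_⟩
    · dsimp only
      split
      · exact ⟨fun i => le_rfl, by simp [hU.le]⟩
      · exact ⟨sing_nonneg _ hU.le, by rw [sing_sum]⟩
    · congr 1
      refine Finset.sum_congr rfl fun ℓ _ => Finset.sum_congr rfl fun j _ => ?_
      obtain ⟨h1, h2, h3⟩ := hab ℓ j
      dsimp only
      split
      · rename_i h
        rw [dist1_zero_eq hd h1 h2, max_eq_left h]
      · rename_i h
        rw [dist1_sing_eq hd h1 h2 h3, max_eq_right (le_of_not_ge h)]
  · rintro e ⟨x, hx, rfl⟩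
    have hM : (0:ℝ) ≤ 1 / ∑ ℓ, (m ℓ : ℝ) := by positivity
    refine mul_le_mul_of_nonneg_left ?_ hM
    refine Finset.sum_le_sum fun ℓ _ => Finset.sum_le_sum fun j _ => ?_
    obtain ⟨h1, h2, h3⟩ := hab ℓ j
    exact dist1_le_max hd h1 h2 h3 (hx ℓ j)
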